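/- Let D be a pure double Boolean algebra. Then the map h defined by h(x) := (F_{¬x}, I_x) is a dBa isomorphism from D onto the dBa of clopen object oriented semiconcepts of K^T_pr(D). In particular (since every Boolean algebra with ⌟ := ¬ is a pure dBa), every Boolean algebra B is isomorphic to the algebra of clopen object oriented semiconcepts of K^T_pr(B). -/

import Mathlib

universe u v

/-- A double Boolean algebra (dBa). -/
structure DBA (D : Type u) where
  sup : D → D → D
  inf : D → D → D
  neg : D → D
  dneg : D → D
  top : D
  bot : D
  ax1a : ∀ x y, inf (inf x x) y = inf x y
  ax2a : ∀ x y, inf x y = inf y x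
  ax3a : ∀ x y z, inf x (inf y z) = inf (inf x y) z
  ax4a : ∀ x, neg (inf x x) = neg x
  ax5a : ∀ x y, inf x (sup x y) = inf x x
  ax6a : ∀ x y z, inf x (neg (inf (neg y) (neg z))) =
      neg (inf (neg (inf x y)) (neg (inf x z)))
  ax7a : ∀ x y, inf x (neg (inf (neg x) (neg y))) = inf x x
  ax8a : ∀ x y, neg (neg (inf x y)) = inf x y
  ax9a : ∀ x, inf x (neg x) = bot
  ax10a : neg bot = inf top top
  ax11a : neg top = bot
  ax1b : ∀ x y, sup (sup x x) y = sup x y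
  ax2b : ∀ x y, sup x y = sup y x
  ax3b : ∀ x y z, sup x (sup y z) = sup (sup x y) z
  ax4b : ∀ x, dneg (sup x x) = dneg x
  ax5b : ∀ x y, sup x (inf x y) = sup x x
  ax6b : ∀ x y z, sup x (dneg (sup (dneg y) (dneg z))) =
      dneg (sup (dneg (sup x y)) (dneg (sup x z)))
  ax7b : ∀ x y, sup x (dneg (sup (dneg x) (dneg y))) = sup x x
  ax8b : ∀ x y, dneg (dneg (sup x y)) = sup x y
  ax9b : ∀ x, sup x (dneg x) = top
  ax10b : dneg top = sup bot bot
  ax11b : dneg bot = top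
  ax12 : ∀ x, sup (inf x x) (inf x x) = inf (sup x x) (sup x x)

namespace DBA

variable {D : Type u} {E : Type v}

/-- x ∨ y := ¬(¬x ⊓ ¬y) -/
def vee (A : DBA D) (x y : D) : D := A.neg (A.inf (A.neg x) (A.neg y))

/-- x ∧ y := ⌟(⌟x ⊔ ⌟y) -/
def wedge (A : DBA D) (x y : D) : D := A.dneg (A.sup (A.dneg x) (A.dneg y))

/-- The quasi-order ⊑. -/
def le (A : DBA D) (x y : D) : Prop := A.inf x y = A.inf x x ∧ A.sup x y = A.sup y y

def IsFilter (A : DBA D) (F : Set D) : Prop :=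
  (∀ x ∈ F, ∀ y ∈ F, A.inf x y ∈ F) ∧ ∀ x ∈ F, ∀ z, A.le x z → z ∈ F

def IsIdeal (A : DBA D) (I : Set D) : Prop :=
  (∀ x ∈ I, ∀ y ∈ I, A.sup x y ∈ I) ∧ ∀ x ∈ I, ∀ z, A.le z x → z ∈ I

def IsPrimaryFilter (A : DBA D) (F : Set D) : Prop :=
  A.IsFilter F ∧ F ≠ Set.univ ∧ ∀ x, x ∈ F ∨ A.neg x ∈ F

def IsPrimaryIdeal (A : DBA D) (I : Set D) : Prop :=
  A.IsIdeal I ∧ I ≠ Set.univ ∧ ∀ x, x ∈ I ∨ A.dneg x ∈ I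

def Pure (A : DBA D) : Prop := ∀ x, A.inf x x = x ∨ A.sup x x = x

def Contextual (A : DBA D) : Prop := ∀ x y, A.le x y → A.le y x → x = y

def FullyContextual (A : DBA D) : Prop :=
  A.Contextual ∧
    ∀ y x, A.inf y y = y → A.sup x x = x → A.sup y y = A.inf x x →
      ∃! z, A.inf z z = y ∧ A.sup z z = x

/-- D_p = D_⊓ ∪ D_⊔ -/
def Dp (A : DBA D) : Set D := {x | A.inf x x = x} ∪ {x | A.sup x x = x}

def IsHom (A : DBA D) (B : DBA E) (h : D → E) : Prop :=
  (∀ x y, h (A.inf x y) = B.inf (h x) (h y)) ∧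
  (∀ x y, h (A.sup x y) = B.sup (h x) (h y)) ∧
  (∀ x, h (A.neg x) = B.neg (h x)) ∧
  (∀ x, h (A.dneg x) = B.dneg (h x)) ∧
  h A.top = B.top ∧ h A.bot = B.bot

def IsHomOn (A : DBA D) (B : DBA E) (S : Set D) (h : D → E) : Prop :=
  (∀ x ∈ S, ∀ y ∈ S, h (A.inf x y) = B.inf (h x) (h y)) ∧
  (∀ x ∈ S, ∀ y ∈ S, h (A.sup x y) = B.sup (h x) (h y)) ∧
  (∀ x ∈ S, h (A.neg x) = B.neg (h x)) ∧
  (∀ x ∈ S, h (A.dneg x) = B.dneg (h x)) ∧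
  h A.top = B.top ∧ h A.bot = B.bot

end DBA

section FCA

variable {G : Type u} {M : Type v}

/-- B^◇ -/
def odia (R : G → M → Prop) (B : Set M) : Set G := {g | ∃ m ∈ B, R g m}
/-- B^□ -/
def obox (R : G → M → Prop) (B : Set M) : Set G := {g | ∀ m, R g m → m ∈ B}
/-- A^◆ -/
def obdia (R : G → M → Prop) (A : Set G) : Set M := {m | ∃ g ∈ A, R g m}
/-- A^■ -/
def obbox (R : G → M → Prop) (A : Set G) : Set M := {m | ∀ g, R g m → g ∈ A}

def pinf (R : G → M → Prop) (p q : Set G × Set M) : Set G × Set M :=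
  (p.1 ∪ q.1, obbox R (p.1 ∪ q.1))
def psup (R : G → M → Prop) (p q : Set G × Set M) : Set G × Set M :=
  (odia R (p.2 ∩ q.2), p.2 ∩ q.2)
def pneg (R : G → M → Prop) (p : Set G × Set M) : Set G × Set M :=
  (p.1ᶜ, obbox R p.1ᶜ)
def pdneg (R : G → M → Prop) (p : Set G × Set M) : Set G × Set M :=
  (odia R p.2ᶜ, p.2ᶜ)
def ptop : Set G × Set M := (∅, ∅)
def pbot : Set G × Set M := (Set.univ, Set.univ)
/-- quasi-order on pairs: (A,B) ⊑ (C,D) iff C ⊆ A and D ⊆ B -/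
def ple (p q : Set G × Set M) : Prop := q.1 ⊆ p.1 ∧ q.2 ⊆ p.2

/-- object oriented protoconcept -/
def IsProto (R : G → M → Prop) (p : Set G × Set M) : Prop :=
  odia R (obbox R p.1) = odia R p.2
/-- object oriented semiconcept -/
def IsSemi (R : G → M → Prop) (p : Set G × Set M) : Prop :=
  obbox R p.1 = p.2 ∨ odia R p.2 = p.1

/-- continuity of the relation R -/
def ContRel [TopologicalSpace G] [TopologicalSpace M] (R : G → M → Prop) : Prop :=
  ∀ O : Set M, IsOpen O → IsOpen (odia R O) ∧ IsOpen (obox R O)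
/-- continuity of the converse relation R⁻¹ -/
def ContRelInv [TopologicalSpace G] [TopologicalSpace M] (R : G → M → Prop) : Prop :=
  ∀ O : Set G, IsOpen O → IsOpen (obdia R O) ∧ IsOpen (obbox R O)

def IsClopenProto [TopologicalSpace G] [TopologicalSpace M] (R : G → M → Prop)
    (p : Set G × Set M) : Prop :=
  IsProto R p ∧ IsClopen p.1 ∧ IsClopen p.2

def IsClopenSemi [TopologicalSpace G] [TopologicalSpace M] (R : G → M → Prop)
    (p : Set G × Set M) : Prop :=
  IsSemi R p ∧ IsClopen p.1 ∧ IsClopen p.2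

def pmap {G' : Type*} {M' : Type*} (α : G → G') (β : M → M') (p : Set G' × Set M') :
    Set G × Set M := (α ⁻¹' p.1, β ⁻¹' p.2)

end FCA

section StoneDBA

variable {D : Type u}

/-- the set of primary filters of a dBa, as a type -/
def PrimF (A : DBA D) : Type u := {F : Set D // A.IsPrimaryFilter F}
/-- the set of primary ideals of a dBa, as a type -/
def PrimI (A : DBA D) : Type u := {I : Set D // A.IsPrimaryIdeal I}
/-- F ∇ I iff F ∩ I = ∅ -/
def nabla (A : DBA D) : PrimF A → PrimI A → Prop := fun F I => F.val ∩ I.val = ∅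
/-- F_x -/
def Fset (A : DBA D) (x : D) : Set (PrimF A) := {F | x ∈ F.val}
/-- I_x -/
def Iset (A : DBA D) (x : D) : Set (PrimI A) := {I | x ∈ I.val}

/-- the topology T on primary filters, with the F_x as a subbase of closed sets -/
def filtTop (A : DBA D) : TopologicalSpace (PrimF A) :=
  TopologicalSpace.generateFrom {U | ∃ x : D, U = (Fset A x)ᶜ}
/-- the topology J on primary ideals, with the I_x as a subbase of closed sets -/
def idlTop (A : DBA D) : TopologicalSpace (PrimI A) :=
  TopologicalSpace.generateFrom {U | ∃ x : D, U = (Iset A x)ᶜ}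

/-- the map h(x) := (F_{¬x}, I_x) -/
def protoEmb (A : DBA D) (x : D) : Set (PrimF A) × Set (PrimI A) :=
  (Fset A (A.neg x), Iset A x)

end StoneDBA

section SemiPrim

variable {G : Type u} {M : Type v} [TopologicalSpace G] [TopologicalSpace M]

/-- a primary filter of the dBa of clopen object oriented semiconcepts -/
def IsSemiPrimFilter (R : G → M → Prop) (F : Set (Set G × Set M)) : Prop :=
  (∀ p ∈ F, IsClopenSemi R p) ∧
  (∀ p ∈ F, ∀ q ∈ F, pinf R p q ∈ F) ∧
  (∀ p ∈ F, ∀ z, IsClopenSemi R z → ple p z → z ∈ F) ∧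
  F ≠ {p | IsClopenSemi R p} ∧
  (∀ p, IsClopenSemi R p → (p ∈ F ∨ pneg R p ∈ F))

/-- a primary ideal of the dBa of clopen object oriented semiconcepts -/
def IsSemiPrimIdeal (R : G → M → Prop) (I : Set (Set G × Set M)) : Prop :=
  (∀ p ∈ I, IsClopenSemi R p) ∧
  (∀ p ∈ I, ∀ q ∈ I, psup R p q ∈ I) ∧
  (∀ p ∈ I, ∀ z, IsClopenSemi R z → ple z p → z ∈ I) ∧
  I ≠ {p | IsClopenSemi R p} ∧
  (∀ p, IsClopenSemi R p → (p ∈ I ∨ pdneg R p ∈ I))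

def SemiPF (R : G → M → Prop) := {F : Set (Set G × Set M) // IsSemiPrimFilter R F}
def SemiPI (R : G → M → Prop) := {I : Set (Set G × Set M) // IsSemiPrimIdeal R I}

def semiPFTop (R : G → M → Prop) : TopologicalSpace (SemiPF R) :=
  TopologicalSpace.generateFrom
    {U | ∃ p, IsClopenSemi R p ∧ U = {F : SemiPF R | p ∈ F.val}ᶜ}
def semiPITop (R : G → M → Prop) : TopologicalSpace (SemiPI R) :=
  TopologicalSpace.generateFrom
    {U | ∃ p, IsClopenSemi R p ∧ U = {I : SemiPI R | p ∈ I.val}ᶜ}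

end SemiPrim

/-- the statement that h(x) := (F_{¬x}, I_x) is a dBa isomorphism from D onto the dBa of
clopen object oriented semiconcepts of K^T_pr(D) -/
def semiRep {D : Type u} (A : DBA D) : Prop :=
  (∀ x y : D, protoEmb A (A.inf x y) = pinf (nabla A) (protoEmb A x) (protoEmb A y)) ∧
  (∀ x y : D, protoEmb A (A.sup x y) = psup (nabla A) (protoEmb A x) (protoEmb A y)) ∧
  (∀ x : D, protoEmb A (A.neg x) = pneg (nabla A) (protoEmb A x)) ∧
  (∀ x : D, protoEmb A (A.dneg x) = pdneg (nabla A) (protoEmb A x)) ∧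
  protoEmb A A.top = ptop ∧
  protoEmb A A.bot = pbot ∧
  Set.BijOn (protoEmb A) Set.univ
    {p | @IsClopenSemi (PrimF A) (PrimI A) (filtTop A) (idlTop A) (nabla A) p}

namespace SR

variable {D : Type u} (A : DBA D)

local infixl:70 " ⊓' " => A.inf
local infixl:65 " ⊔' " => A.sup

local instance : Std.Associative A.inf := ⟨fun a b c => (A.ax3a a b c).symm⟩
local instance : Std.Commutative A.inf := ⟨A.ax2a⟩
local instance : Std.Associative A.sup := ⟨fun a b c => (A.ax3b a b c).symm⟩
local instance : Std.Commutative A.sup := ⟨A.ax2b⟩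

/-! ### Core algebraic lemmas -/

theorem inf_idem2 (x y : D) : (x ⊓' y) ⊓' (x ⊓' y) = x ⊓' y := by
  calc (x ⊓' y) ⊓' (x ⊓' y) = (x ⊓' x) ⊓' (y ⊓' y) := by ac_rfl
    _ = x ⊓' (y ⊓' y) := A.ax1a _ _
    _ = (y ⊓' y) ⊓' x := A.ax2a _ _
    _ = y ⊓' x := A.ax1a _ _
    _ = x ⊓' y := A.ax2a _ _

theorem sup_idem2 (x y : D) : (x ⊔' y) ⊔' (x ⊔' y) = x ⊔' y := by
  calc (x ⊔' y) ⊔' (x ⊔' y) = (x ⊔' x) ⊔' (y ⊔' y) := by ac_rfl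
    _ = x ⊔' (y ⊔' y) := A.ax1b _ _
    _ = (y ⊔' y) ⊔' x := A.ax2b _ _
    _ = y ⊔' x := A.ax1b _ _
    _ = x ⊔' y := A.ax2b _ _

theorem bot_inf (z : D) : A.bot ⊓' z = A.bot := by
  rw [← A.ax9a z]
  calc (z ⊓' A.neg z) ⊓' z = (z ⊓' z) ⊓' A.neg z := by ac_rfl
    _ = z ⊓' A.neg z := A.ax1a _ _

theorem inf_bot (z : D) : z ⊓' A.bot = A.bot := by rw [A.ax2a]; exact bot_inf A z

theorem top_sup (z : D) : A.top ⊔' z = A.top := by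
  rw [← A.ax9b z]
  calc (z ⊔' A.dneg z) ⊔' z = (z ⊔' z) ⊔' A.dneg z := by ac_rfl
    _ = z ⊔' A.dneg z := A.ax1b _ _

theorem sup_top (z : D) : z ⊔' A.top = A.top := by rw [A.ax2b]; exact top_sup A z

theorem inf_top (x : D) : x ⊓' A.top = x ⊓' x := by rw [← A.ax9b x]; exact A.ax5a _ _

theorem top_inf (x : D) : A.top ⊓' x = x ⊓' x := by rw [A.ax2a]; exact inf_top A x

theorem sup_bot (x : D) : x ⊔' A.bot = x ⊔' x := by rw [← A.ax9a x]; exact A.ax5b _ _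

theorem bot_sup (x : D) : A.bot ⊔' x = x ⊔' x := by rw [A.ax2b]; exact sup_bot A x

theorem le_refl (x : D) : A.le x x := ⟨rfl, rfl⟩

theorem le_trans {x y z : D} (h1 : A.le x y) (h2 : A.le y z) : A.le x z := by
  obtain ⟨a1, a2⟩ := h1
  obtain ⟨b1, b2⟩ := h2
  constructor
  · calc x ⊓' z = (x ⊓' x) ⊓' z := (A.ax1a _ _).symm
      _ = (x ⊓' y) ⊓' z := by rw [a1]
      _ = x ⊓' (y ⊓' z) := (A.ax3a _ _ _).symm
      _ = x ⊓' (y ⊓' y) := by rw [b1]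
      _ = (x ⊓' y) ⊓' y := A.ax3a _ _ _
      _ = (x ⊓' x) ⊓' y := by rw [a1]
      _ = x ⊓' y := A.ax1a _ _
      _ = x ⊓' x := a1
  · calc x ⊔' z = x ⊔' (z ⊔' z) := by rw [A.ax2b x z, ← A.ax1b z x, A.ax2b _ x]
      _ = x ⊔' (y ⊔' z) := by rw [b2]
      _ = (x ⊔' y) ⊔' z := A.ax3b _ _ _
      _ = (y ⊔' y) ⊔' z := by rw [a2]
      _ = y ⊔' z := A.ax1b _ _
      _ = z ⊔' z := b2

theorem bot_le (x : D) : A.le A.bot x := by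
  refine ⟨by rw [bot_inf, inf_bot], ?_⟩
  rw [A.ax2b, sup_bot]

theorem le_top (x : D) : A.le x A.top := by
  refine ⟨inf_top A x, ?_⟩
  rw [sup_top, top_sup]

theorem inf_le_left (x y : D) : A.le (x ⊓' y) x := by
  constructor
  · calc (x ⊓' y) ⊓' x = (x ⊓' x) ⊓' y := by ac_rfl
      _ = x ⊓' y := A.ax1a _ _
      _ = (x ⊓' y) ⊓' (x ⊓' y) := (inf_idem2 A x y).symm
  · rw [A.ax2b]; exact A.ax5b _ _

theorem inf_le_right (x y : D) : A.le (x ⊓' y) y := by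
  rw [A.ax2a]; exact inf_le_left A y x

theorem le_sup_left (x y : D) : A.le x (x ⊔' y) := by
  constructor
  · exact A.ax5a _ _
  · calc x ⊔' (x ⊔' y) = (x ⊔' x) ⊔' y := A.ax3b _ _ _
      _ = x ⊔' y := A.ax1b _ _
      _ = (x ⊔' y) ⊔' (x ⊔' y) := (sup_idem2 A x y).symm

theorem le_sup_right (x y : D) : A.le y (x ⊔' y) := by
  rw [A.ax2b]; exact le_sup_left A y x

theorem idem_le {m z : D} (hm : m ⊓' m = m) (h : m ⊓' z = m) : A.le m z := by
  constructor
  · rw [h, hm]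
  · have := A.ax5b z m
    rw [A.ax2a z m, h] at this
    rw [A.ax2b m z, this]

theorem le_of_sup_eq {p w : D} (hp : p ⊔' p = p) (h : w ⊔' p = p) : A.le w p := by
  constructor
  · conv_lhs => rw [← h]
    exact A.ax5a _ _
  · rw [h, hp]

theorem neg_neg (x : D) : A.neg (A.neg x) = x ⊓' x := by
  rw [← A.ax4a x]; exact A.ax8a x x

theorem dneg_dneg (x : D) : A.dneg (A.dneg x) = x ⊔' x := by
  rw [← A.ax4b x]; exact A.ax8b x x

theorem neg_idem (x : D) : A.neg x ⊓' A.neg x = A.neg x := by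
  rw [← neg_neg A (A.neg x), neg_neg A x, A.ax4a]

theorem dneg_idem (x : D) : A.dneg x ⊔' A.dneg x = A.dneg x := by
  rw [← dneg_dneg A (A.dneg x), dneg_dneg A x, A.ax4b]

theorem inf_toptop {m : D} (hm : m ⊓' m = m) : m ⊓' (A.top ⊓' A.top) = m := by
  calc m ⊓' (A.top ⊓' A.top) = (m ⊓' A.top) ⊓' A.top := A.ax3a _ _ _
    _ = (m ⊓' m) ⊓' A.top := by rw [inf_top A m]
    _ = m ⊓' A.top := by rw [hm]
    _ = m ⊓' m := inf_top A m
    _ = m := hm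

theorem sup_botbot {m : D} (hm : m ⊔' m = m) : m ⊔' (A.bot ⊔' A.bot) = m := by
  calc m ⊔' (A.bot ⊔' A.bot) = (m ⊔' A.bot) ⊔' A.bot := A.ax3b _ _ _
    _ = (m ⊔' m) ⊔' A.bot := by rw [sup_bot A m]
    _ = m ⊔' A.bot := by rw [hm]
    _ = m ⊔' m := sup_bot A m
    _ = m := hm

theorem vee_compl (y : D) : A.vee y (A.neg y) = A.top ⊓' A.top := by
  unfold DBA.vee
  rw [A.ax9a (A.neg y), A.ax10a]

theorem wedge_compl (y : D) : A.wedge y (A.dneg y) = A.bot ⊔' A.bot := by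
  unfold DBA.wedge
  rw [A.ax9b (A.dneg y), A.ax10b]

theorem inf_vee (x y z : D) : x ⊓' (A.vee y z) = A.vee (x ⊓' y) (x ⊓' z) := A.ax6a x y z

theorem sup_wedge (x y z : D) : x ⊔' (A.wedge y z) = A.wedge (x ⊔' y) (x ⊔' z) := A.ax6b x y z

theorem vee_idem (x y : D) : A.vee x y ⊓' A.vee x y = A.vee x y := neg_idem A _

theorem wedge_idem (x y : D) : A.wedge x y ⊔' A.wedge x y = A.wedge x y := dneg_idem A _

theorem vee_le {a b w : D} (h1 : A.le a w) (h2 : A.le b w) : A.le (A.vee a b) w := by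
  have c1 : w ⊓' a = a ⊓' a := by rw [A.ax2a]; exact h1.1
  have c2 : w ⊓' b = b ⊓' b := by rw [A.ax2a]; exact h2.1
  have key : A.vee a b ⊓' w = A.vee a b := by
    calc A.vee a b ⊓' w = w ⊓' A.vee a b := A.ax2a _ _
      _ = A.vee (w ⊓' a) (w ⊓' b) := inf_vee A _ _ _
      _ = A.vee (a ⊓' a) (b ⊓' b) := by rw [c1, c2]
      _ = A.vee a b := by unfold DBA.vee; rw [A.ax4a, A.ax4a]
  exact idem_le A (vee_idem A a b) key

theorem le_wedge {a b w : D} (h1 : A.le w a) (h2 : A.le w b) : A.le w (A.wedge a b) := by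
  have c1 : w ⊔' a = a ⊔' a := h1.2
  have c2 : w ⊔' b = b ⊔' b := h2.2
  have key : w ⊔' A.wedge a b = A.wedge a b := by
    calc w ⊔' A.wedge a b = A.wedge (w ⊔' a) (w ⊔' b) := sup_wedge A _ _ _
      _ = A.wedge (a ⊔' a) (b ⊔' b) := by rw [c1, c2]
      _ = A.wedge a b := by unfold DBA.wedge; rw [A.ax4b, A.ax4b]
  exact le_of_sup_eq A (wedge_idem A a b) key

/-! ### Filter and ideal basics -/

theorem filter_univ_of_bot {F : Set D} (hF : A.IsFilter F) (h : A.bot ∈ F) : F = Set.univ :=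
  Set.eq_univ_of_forall fun z => hF.2 _ h z (bot_le A z)

theorem ideal_univ_of_top {I : Set D} (hI : A.IsIdeal I) (h : A.top ∈ I) : I = Set.univ :=
  Set.eq_univ_of_forall fun z => hI.2 _ h z (le_top A z)

theorem pf_top_mem {F : Set D} (hF : A.IsPrimaryFilter F) : A.top ∈ F := by
  rcases hF.2.2 A.top with h | h
  · exact h
  · exact hF.1.2 _ h _ (le_top A _)

theorem pi_bot_mem {I : Set D} (hI : A.IsPrimaryIdeal I) : A.bot ∈ I := by
  rcases hI.2.2 A.bot with h | h
  · exact h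
  · exact hI.1.2 _ h _ (bot_le A _)

theorem pf_bot_not_mem {F : Set D} (hF : A.IsPrimaryFilter F) : A.bot ∉ F := fun h =>
  hF.2.1 (filter_univ_of_bot A hF.1 h)

theorem pi_top_not_mem {I : Set D} (hI : A.IsPrimaryIdeal I) : A.top ∉ I := fun h =>
  hI.2.1 (ideal_univ_of_top A hI.1 h)

theorem pf_not_both {F : Set D} (hF : A.IsPrimaryFilter F) {x : D}
    (h1 : x ∈ F) (h2 : A.neg x ∈ F) : False := by
  have : x ⊓' A.neg x ∈ F := hF.1.1 _ h1 _ h2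
  rw [A.ax9a] at this
  exact pf_bot_not_mem A hF this

theorem pi_not_both {I : Set D} (hI : A.IsPrimaryIdeal I) {x : D}
    (h1 : x ∈ I) (h2 : A.dneg x ∈ I) : False := by
  have : x ⊔' A.dneg x ∈ I := hI.1.1 _ h1 _ h2
  rw [A.ax9b] at this
  exact pi_top_not_mem A hI this

theorem pf_inf_mem_iff {F : Set D} (hF : A.IsPrimaryFilter F) {x y : D} :
    x ⊓' y ∈ F ↔ x ∈ F ∧ y ∈ F :=
  ⟨fun h => ⟨hF.1.2 _ h _ (inf_le_left A x y), hF.1.2 _ h _ (inf_le_right A x y)⟩,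
   fun ⟨h1, h2⟩ => hF.1.1 _ h1 _ h2⟩

theorem pi_sup_mem_iff {I : Set D} (hI : A.IsPrimaryIdeal I) {x y : D} :
    x ⊔' y ∈ I ↔ x ∈ I ∧ y ∈ I :=
  ⟨fun h => ⟨hI.1.2 _ h _ (le_sup_left A x y), hI.1.2 _ h _ (le_sup_right A x y)⟩,
   fun ⟨h1, h2⟩ => hI.1.1 _ h1 _ h2⟩

theorem pf_neg_mem_iff {F : Set D} (hF : A.IsPrimaryFilter F) {x : D} :
    A.neg x ∈ F ↔ x ∉ F :=
  ⟨fun h hx => pf_not_both A hF hx h, fun h => (hF.2.2 x).resolve_left h⟩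

theorem pi_dneg_mem_iff {I : Set D} (hI : A.IsPrimaryIdeal I) {x : D} :
    A.dneg x ∈ I ↔ x ∉ I :=
  ⟨fun h hx => pi_not_both A hI hx h, fun h => (hI.2.2 x).resolve_left h⟩

theorem pf_infxx_mem_iff {F : Set D} (hF : A.IsPrimaryFilter F) {x : D} :
    x ⊓' x ∈ F ↔ x ∈ F := by
  rw [pf_inf_mem_iff A hF, and_self]

theorem pi_supxx_mem_iff {I : Set D} (hI : A.IsPrimaryIdeal I) {x : D} :
    x ⊔' x ∈ I ↔ x ∈ I := by
  rw [pi_sup_mem_iff A hI, and_self]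

theorem pf_vee_mem_iff {F : Set D} (hF : A.IsPrimaryFilter F) {x y : D} :
    A.vee x y ∈ F ↔ x ∈ F ∨ y ∈ F := by
  constructor
  · intro h
    by_contra hc
    push_neg at hc
    have hx : A.neg x ∈ F := (pf_neg_mem_iff A hF).mpr hc.1
    have hy : A.neg y ∈ F := (pf_neg_mem_iff A hF).mpr hc.2
    exact pf_not_both A hF (hF.1.1 _ hx _ hy) h
  · intro h
    rcases hF.2.2 (A.vee x y) with hv | hv
    · exact hv
    · exfalso
      have : (A.neg x ⊓' A.neg y) ⊓' (A.neg x ⊓' A.neg y) ∈ F := by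
        have e : A.neg (A.vee x y) = (A.neg x ⊓' A.neg y) ⊓' (A.neg x ⊓' A.neg y) :=
          neg_neg A _
        rw [← e]; exact hv
      have hw : A.neg x ⊓' A.neg y ∈ F :=
        hF.1.2 _ this _ (inf_le_left A _ _)
      rcases h with h | h
      · exact pf_not_both A hF h (hF.1.2 _ hw _ (inf_le_left A _ _))
      · exact pf_not_both A hF h (hF.1.2 _ hw _ (inf_le_right A _ _))

theorem pi_wedge_mem_iff {I : Set D} (hI : A.IsPrimaryIdeal I) {x y : D} :
    A.wedge x y ∈ I ↔ x ∈ I ∨ y ∈ I := by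
  constructor
  · intro h
    by_contra hc
    push_neg at hc
    have hx : A.dneg x ∈ I := (pi_dneg_mem_iff A hI).mpr hc.1
    have hy : A.dneg y ∈ I := (pi_dneg_mem_iff A hI).mpr hc.2
    have hw : A.dneg x ⊔' A.dneg y ∈ I := hI.1.1 _ hx _ hy
    have : A.wedge x y ⊔' (A.dneg x ⊔' A.dneg y) ∈ I := hI.1.1 _ h _ hw
    have e : A.wedge x y ⊔' (A.dneg x ⊔' A.dneg y) = A.top := by
      unfold DBA.wedge
      rw [A.ax2b]
      exact A.ax9b _
    rw [e] at this
    exact pi_top_not_mem A hI this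
  · intro h
    rcases hI.2.2 (A.wedge x y) with hv | hv
    · exact hv
    · exfalso
      have e : A.dneg (A.wedge x y) = A.dneg x ⊔' A.dneg y := A.ax8b _ _
      rw [e] at hv
      rcases h with h | h
      · have : x ⊔' (A.dneg x ⊔' A.dneg y) ∈ I := hI.1.1 _ h _ hv
        have e2 : x ⊔' (A.dneg x ⊔' A.dneg y) = A.top ⊔' A.dneg y := by
          rw [A.ax3b, A.ax9b]
        rw [e2, top_sup] at this
        exact pi_top_not_mem A hI this
      · have : y ⊔' (A.dneg x ⊔' A.dneg y) ∈ I := hI.1.1 _ h _ hv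
        have e2 : y ⊔' (A.dneg x ⊔' A.dneg y) = A.dneg x ⊔' (y ⊔' A.dneg y) := by ac_rfl
        rw [e2, A.ax9b, sup_top] at this
        exact pi_top_not_mem A hI this

/-! ### Fset and Iset -/

theorem mem_Fset {x : D} {F : PrimF A} : F ∈ Fset A x ↔ x ∈ F.val := Iff.rfl

theorem Fset_inf (x y : D) : Fset A (x ⊓' y) = Fset A x ∩ Fset A y :=
  Set.ext fun F => pf_inf_mem_iff A F.2

theorem Fset_neg (x : D) : Fset A (A.neg x) = (Fset A x)ᶜ :=
  Set.ext fun F => pf_neg_mem_iff A F.2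

theorem Fset_vee (x y : D) : Fset A (A.vee x y) = Fset A x ∪ Fset A y :=
  Set.ext fun F => pf_vee_mem_iff A F.2

theorem Fset_top : Fset A A.top = Set.univ :=
  Set.eq_univ_of_forall fun F => pf_top_mem A F.2

theorem Fset_bot : Fset A A.bot = ∅ :=
  Set.eq_empty_of_forall_notMem fun F => pf_bot_not_mem A F.2

theorem Fset_infxx (x : D) : Fset A (x ⊓' x) = Fset A x :=
  Set.ext fun F => pf_infxx_mem_iff A F.2

theorem Iset_sup (x y : D) : Iset A (x ⊔' y) = Iset A x ∩ Iset A y :=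
  Set.ext fun I => pi_sup_mem_iff A I.2

theorem Iset_dneg (x : D) : Iset A (A.dneg x) = (Iset A x)ᶜ :=
  Set.ext fun I => pi_dneg_mem_iff A I.2

theorem Iset_wedge (x y : D) : Iset A (A.wedge x y) = Iset A x ∪ Iset A y :=
  Set.ext fun I => pi_wedge_mem_iff A I.2

theorem Iset_bot : Iset A A.bot = Set.univ :=
  Set.eq_univ_of_forall fun I => pi_bot_mem A I.2

theorem Iset_top : Iset A A.top = ∅ :=
  Set.eq_empty_of_forall_notMem fun I => pi_top_not_mem A I.2

theorem Iset_supxx (x : D) : Iset A (x ⊔' x) = Iset A x :=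
  Set.ext fun I => pi_supxx_mem_iff A I.2

/-! ### Filter extension and Zorn -/

def Fext (M : Set D) (y : D) : Set D := {z | ∃ c ∈ M, (c ⊓' y) ⊓' z = c ⊓' y}

def Iext (M : Set D) (y : D) : Set D := {z | ∃ c ∈ M, z ⊔' (c ⊔' y) = c ⊔' y}

theorem le_of_inf_eq' {m z : D} (h : m ⊓' z = m) (hm : m ⊓' m = m) : A.le m z :=
  idem_le A hm h

theorem Fext_isFilter {M : Set D} (hM : A.IsFilter M) (y : D) : A.IsFilter (Fext A M y) := by
  constructor
  · rintro z ⟨c, hc, hz⟩ z' ⟨c', hc', hz'⟩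
    refine ⟨c ⊓' c', hM.1 _ hc _ hc', ?_⟩
    calc ((c ⊓' c') ⊓' y) ⊓' (z ⊓' z')
        = (y ⊓' (c ⊓' c')) ⊓' (z ⊓' z') := by ac_rfl
      _ = ((y ⊓' y) ⊓' (c ⊓' c')) ⊓' (z ⊓' z') := by rw [A.ax1a y (c ⊓' c')]
      _ = ((c ⊓' y) ⊓' z) ⊓' ((c' ⊓' y) ⊓' z') := by ac_rfl
      _ = (c ⊓' y) ⊓' (c' ⊓' y) := by rw [hz, hz']
      _ = (y ⊓' y) ⊓' (c ⊓' c') := by ac_rfl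
      _ = y ⊓' (c ⊓' c') := A.ax1a _ _
      _ = (c ⊓' c') ⊓' y := A.ax2a _ _
  · rintro z ⟨c, hc, hz⟩ z' hzz'
    refine ⟨c, hc, ?_⟩
    have h1 : A.le (c ⊓' y) z := idem_le A (inf_idem2 A c y) hz
    have h2 : A.le (c ⊓' y) z' := le_trans A h1 hzz'
    rw [h2.1]
    exact inf_idem2 A c y

theorem Iext_isIdeal {M : Set D} (hM : A.IsIdeal M) (y : D) : A.IsIdeal (Iext A M y) := by
  constructor
  · rintro z ⟨c, hc, hz⟩ z' ⟨c', hc', hz'⟩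
    refine ⟨c ⊔' c', hM.1 _ hc _ hc', ?_⟩
    calc (z ⊔' z') ⊔' ((c ⊔' c') ⊔' y)
        = (z ⊔' z') ⊔' (y ⊔' (c ⊔' c')) := by ac_rfl
      _ = (z ⊔' z') ⊔' ((y ⊔' y) ⊔' (c ⊔' c')) := by rw [A.ax1b y (c ⊔' c')]
      _ = (z ⊔' (c ⊔' y)) ⊔' (z' ⊔' (c' ⊔' y)) := by ac_rfl
      _ = (c ⊔' y) ⊔' (c' ⊔' y) := by rw [hz, hz']
      _ = (y ⊔' y) ⊔' (c ⊔' c') := by ac_rfl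
      _ = y ⊔' (c ⊔' c') := A.ax1b _ _
      _ = (c ⊔' c') ⊔' y := A.ax2b _ _
  · rintro z ⟨c, hc, hz⟩ z' hzz'
    refine ⟨c, hc, ?_⟩
    have h1 : A.le z (c ⊔' y) := le_of_sup_eq A (sup_idem2 A c y) hz
    have h2 : A.le z' (c ⊔' y) := le_trans A hzz' h1
    exact h2.2.trans (sup_idem2 A c y)

theorem Fext_subset {M : Set D} (y : D) : M ⊆ Fext A M y := by
  intro z hz
  refine ⟨z, hz, ?_⟩
  calc (z ⊓' y) ⊓' z = (z ⊓' z) ⊓' y := by ac_rfl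
    _ = z ⊓' y := A.ax1a _ _

theorem Iext_subset {M : Set D} (y : D) : M ⊆ Iext A M y := by
  intro z hz
  refine ⟨z, hz, ?_⟩
  calc z ⊔' (z ⊔' y) = (z ⊔' z) ⊔' y := A.ax3b _ _ _
    _ = z ⊔' y := A.ax1b _ _

theorem Fext_mem {M : Set D} (htop : A.top ∈ M) (y : D) : y ∈ Fext A M y := by
  refine ⟨A.top, htop, ?_⟩
  rw [top_inf]
  calc (y ⊓' y) ⊓' y = y ⊓' y := A.ax1a _ _

theorem Iext_mem {M : Set D} (hbot : A.bot ∈ M) (y : D) : y ∈ Iext A M y := by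
  refine ⟨A.bot, hbot, ?_⟩
  rw [bot_sup]
  calc y ⊔' (y ⊔' y) = (y ⊔' y) ⊔' y := A.ax3b _ _ _
    _ = y ⊔' y := A.ax1b _ _

theorem zorn_filter (G : Set D) (hG : A.IsFilter G) (hGtop : A.top ∈ G) (B : Set D)
    (hB : B.Nonempty) (hGB : ∀ z ∈ G, z ∉ B)
    (hw : ∀ w₁ ∈ B, ∀ w₂ ∈ B, ∃ w₃,
      (∀ a b, A.le a w₁ → A.le b w₂ → A.le (A.vee a b) w₃) ∧
      ∀ S, A.IsFilter S → (∀ z ∈ S, z ∉ B) → w₃ ∉ S) :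
    ∃ M, G ⊆ M ∧ A.IsPrimaryFilter M ∧ ∀ z ∈ M, z ∉ B := by
  classical
  set 𝒮 : Set (Set D) := {F | A.IsFilter F ∧ G ⊆ F ∧ ∀ z ∈ F, z ∉ B} with h𝒮
  have hGS : G ∈ 𝒮 := ⟨hG, subset_rfl, hGB⟩
  have hub : ∀ c ⊆ 𝒮, IsChain (· ⊆ ·) c → c.Nonempty → ∃ ub ∈ 𝒮, ∀ s ∈ c, s ⊆ ub := by
    intro c hc hchain hne
    obtain ⟨F₀, hF₀⟩ := hne
    refine ⟨⋃₀ c, ⟨⟨?_, ?_⟩, ?_, ?_⟩, fun s hs => Set.subset_sUnion_of_mem hs⟩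
    · rintro z ⟨F₁, hF₁c, hz⟩ z' ⟨F₂, hF₂c, hz'⟩
      rcases hchain.total hF₁c hF₂c with h | h
      · exact ⟨F₂, hF₂c, (hc hF₂c).1.1 _ (h hz) _ hz'⟩
      · exact ⟨F₁, hF₁c, (hc hF₁c).1.1 _ hz _ (h hz')⟩
    · rintro z ⟨F₁, hF₁c, hz⟩ z' hle
      exact ⟨F₁, hF₁c, (hc hF₁c).1.2 _ hz _ hle⟩
    · exact (hc hF₀).2.1.trans (Set.subset_sUnion_of_mem hF₀)
    · rintro z ⟨F₁, hF₁c, hz⟩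
      exact (hc hF₁c).2.2 z hz
  obtain ⟨M, hGM, hMmax⟩ := zorn_subset_nonempty 𝒮 hub G hGS
  have hMS : M ∈ 𝒮 := hMmax.1
  have hMfil : A.IsFilter M := hMS.1
  have hMB : ∀ z ∈ M, z ∉ B := hMS.2.2
  have htopM : A.top ∈ M := hGM hGtop
  refine ⟨M, hGM, ⟨hMfil, ?_, ?_⟩, hMB⟩
  · intro h
    obtain ⟨w, hwB⟩ := hB
    exact hMB w (h ▸ Set.mem_univ w) hwB
  · intro y
    by_contra hcon
    push_neg at hcon
    obtain ⟨hy, hny⟩ := hcon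
    have hext : ∀ t : D, t ∉ M → ∃ w ∈ B, ∃ c ∈ M, (c ⊓' t) ⊓' w = c ⊓' t := by
      intro t ht
      by_contra hno
      push_neg at hno
      have hFS : Fext A M t ∈ 𝒮 := by
        refine ⟨Fext_isFilter A hMfil t, hGM.trans (Fext_subset A t), ?_⟩
        rintro z ⟨c, hc, hz⟩ hzB
        exact hno z hzB c hc hz
      have := hMmax.2 hFS (Fext_subset A t)
      exact ht (this (Fext_mem A htopM t))
    obtain ⟨w₁, hw₁B, c, hcM, hc1⟩ := hext y hy
    obtain ⟨w₂, hw₂B, c', hc'M, hc2⟩ := hext (A.neg y) hny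
    obtain ⟨w₃, hjoin, hnot⟩ := hw w₁ hw₁B w₂ hw₂B
    have hc''M : c ⊓' c' ∈ M := hMfil.1 _ hcM _ hc'M
    have hidem : ∀ u v t : D, ((u ⊓' v) ⊓' t) ⊓' (u ⊓' t) = (u ⊓' v) ⊓' t := by
      intro u v t
      calc ((u ⊓' v) ⊓' t) ⊓' (u ⊓' t) = (t ⊓' t) ⊓' ((u ⊓' u) ⊓' v) := by ac_rfl
        _ = t ⊓' ((u ⊓' u) ⊓' v) := by rw [A.ax1a t ((u ⊓' u) ⊓' v)]
        _ = (u ⊓' u) ⊓' (v ⊓' t) := by ac_rfl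
        _ = u ⊓' (v ⊓' t) := by rw [A.ax1a u (v ⊓' t)]
        _ = (u ⊓' v) ⊓' t := A.ax3a _ _ _
    have ha : A.le ((c ⊓' c') ⊓' y) w₁ :=
      le_trans A (idem_le A (inf_idem2 A _ _) (hidem c c' y))
        (idem_le A (inf_idem2 A c y) hc1)
    have hb : A.le ((c ⊓' c') ⊓' A.neg y) w₂ := by
      have e0 : (c ⊓' c') ⊓' A.neg y = (c' ⊓' c) ⊓' A.neg y := by ac_rfl
      rw [e0]
      exact le_trans A (idem_le A (inf_idem2 A _ _) (hidem c' c (A.neg y)))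
        (idem_le A (inf_idem2 A c' (A.neg y)) hc2)
    have hle : A.le (c ⊓' c') w₃ := by
      have hkey : c ⊓' c' = A.vee ((c ⊓' c') ⊓' y) ((c ⊓' c') ⊓' A.neg y) := by
        rw [← inf_vee, vee_compl, inf_toptop A (inf_idem2 A c c')]
      rw [hkey]
      exact hjoin _ _ ha hb
    exact hnot M hMfil hMB (hMfil.2 _ hc''M _ hle)

theorem zorn_ideal (G : Set D) (hG : A.IsIdeal G) (hGbot : A.bot ∈ G) (B : Set D)
    (hB : B.Nonempty) (hGB : ∀ z ∈ G, z ∉ B)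
    (hw : ∀ w₁ ∈ B, ∀ w₂ ∈ B, ∃ w₃,
      (∀ a b, A.le w₁ a → A.le w₂ b → A.le w₃ (A.wedge a b)) ∧
      ∀ S, A.IsIdeal S → (∀ z ∈ S, z ∉ B) → w₃ ∉ S) :
    ∃ M, G ⊆ M ∧ A.IsPrimaryIdeal M ∧ ∀ z ∈ M, z ∉ B := by
  classical
  set 𝒮 : Set (Set D) := {F | A.IsIdeal F ∧ G ⊆ F ∧ ∀ z ∈ F, z ∉ B} with h𝒮
  have hGS : G ∈ 𝒮 := ⟨hG, subset_rfl, hGB⟩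
  have hub : ∀ c ⊆ 𝒮, IsChain (· ⊆ ·) c → c.Nonempty → ∃ ub ∈ 𝒮, ∀ s ∈ c, s ⊆ ub := by
    intro c hc hchain hne
    obtain ⟨F₀, hF₀⟩ := hne
    refine ⟨⋃₀ c, ⟨⟨?_, ?_⟩, ?_, ?_⟩, fun s hs => Set.subset_sUnion_of_mem hs⟩
    · rintro z ⟨F₁, hF₁c, hz⟩ z' ⟨F₂, hF₂c, hz'⟩
      rcases hchain.total hF₁c hF₂c with h | h
      · exact ⟨F₂, hF₂c, (hc hF₂c).1.1 _ (h hz) _ hz'⟩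
      · exact ⟨F₁, hF₁c, (hc hF₁c).1.1 _ hz _ (h hz')⟩
    · rintro z ⟨F₁, hF₁c, hz⟩ z' hle
      exact ⟨F₁, hF₁c, (hc hF₁c).1.2 _ hz _ hle⟩
    · exact (hc hF₀).2.1.trans (Set.subset_sUnion_of_mem hF₀)
    · rintro z ⟨F₁, hF₁c, hz⟩
      exact (hc hF₁c).2.2 z hz
  obtain ⟨M, hGM, hMmax⟩ := zorn_subset_nonempty 𝒮 hub G hGS
  have hMS : M ∈ 𝒮 := hMmax.1
  have hMfil : A.IsIdeal M := hMS.1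
  have hMB : ∀ z ∈ M, z ∉ B := hMS.2.2
  have hbotM : A.bot ∈ M := hGM hGbot
  refine ⟨M, hGM, ⟨hMfil, ?_, ?_⟩, hMB⟩
  · intro h
    obtain ⟨w, hwB⟩ := hB
    exact hMB w (h ▸ Set.mem_univ w) hwB
  · intro y
    by_contra hcon
    push_neg at hcon
    obtain ⟨hy, hny⟩ := hcon
    have hext : ∀ t : D, t ∉ M → ∃ w ∈ B, ∃ c ∈ M, w ⊔' (c ⊔' t) = c ⊔' t := by
      intro t ht
      by_contra hno
      push_neg at hno
      have hFS : Iext A M t ∈ 𝒮 := by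
        refine ⟨Iext_isIdeal A hMfil t, hGM.trans (Iext_subset A t), ?_⟩
        rintro z ⟨c, hc, hz⟩ hzB
        exact hno z hzB c hc hz
      have := hMmax.2 hFS (Iext_subset A t)
      exact ht (this (Iext_mem A hbotM t))
    obtain ⟨w₁, hw₁B, c, hcM, hc1⟩ := hext y hy
    obtain ⟨w₂, hw₂B, c', hc'M, hc2⟩ := hext (A.dneg y) hny
    obtain ⟨w₃, hjoin, hnot⟩ := hw w₁ hw₁B w₂ hw₂B
    have hc''M : c ⊔' c' ∈ M := hMfil.1 _ hcM _ hc'M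
    have hidem : ∀ u v t : D, (u ⊔' t) ⊔' ((u ⊔' v) ⊔' t) = (u ⊔' v) ⊔' t := by
      intro u v t
      calc (u ⊔' t) ⊔' ((u ⊔' v) ⊔' t) = (t ⊔' t) ⊔' ((u ⊔' u) ⊔' v) := by ac_rfl
        _ = t ⊔' ((u ⊔' u) ⊔' v) := by rw [A.ax1b t ((u ⊔' u) ⊔' v)]
        _ = (u ⊔' u) ⊔' (v ⊔' t) := by ac_rfl
        _ = u ⊔' (v ⊔' t) := by rw [A.ax1b u (v ⊔' t)]
        _ = (u ⊔' v) ⊔' t := A.ax3b _ _ _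
    have hup : ∀ u v t : D, A.le (u ⊔' t) ((u ⊔' v) ⊔' t) := fun u v t =>
      le_of_sup_eq A (sup_idem2 A _ _) (hidem u v t)
    have ha : A.le w₁ ((c ⊔' c') ⊔' y) :=
      le_trans A (le_of_sup_eq A (sup_idem2 A c y) hc1) (hup c c' y)
    have hb : A.le w₂ ((c ⊔' c') ⊔' A.dneg y) := by
      have e0 : (c ⊔' c') ⊔' A.dneg y = (c' ⊔' c) ⊔' A.dneg y := by ac_rfl
      rw [e0]
      exact le_trans A (le_of_sup_eq A (sup_idem2 A c' (A.dneg y)) hc2) (hup c' c (A.dneg y))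
    have hle : A.le w₃ (c ⊔' c') := by
      have hkey : c ⊔' c' = A.wedge ((c ⊔' c') ⊔' y) ((c ⊔' c') ⊔' A.dneg y) := by
        rw [← sup_wedge, wedge_compl, sup_botbot A (sup_idem2 A c c')]
      rw [hkey]
      exact hjoin _ _ ha hb
    exact hnot M hMfil hMB (hMfil.2 _ hc''M _ hle)

/-! ### Master identities -/

theorem upset_isFilter {u : D} (hu : u ⊓' u = u) : A.IsFilter {z | u ⊓' z = u} := by
  constructor
  · intro z hz z' hz'
    show u ⊓' (z ⊓' z') = u
    calc u ⊓' (z ⊓' z') = (u ⊓' z) ⊓' z' := A.ax3a _ _ _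
      _ = u ⊓' z' := by rw [hz]
      _ = u := hz'
  · intro z hz z' hle
    have h1 : A.le u z := idem_le A hu hz
    have h2 : A.le u z' := le_trans A h1 hle
    show u ⊓' z' = u
    rw [h2.1, hu]

theorem downset_isIdeal {v : D} (hv : v ⊔' v = v) : A.IsIdeal {z | z ⊔' v = v} := by
  constructor
  · intro z hz z' hz'
    show (z ⊔' z') ⊔' v = v
    calc (z ⊔' z') ⊔' v = z ⊔' (z' ⊔' v) := (A.ax3b _ _ _).symm
      _ = z ⊔' v := by rw [hz']
      _ = v := hz
  · intro z hz z' hle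
    have h1 : A.le z v := le_of_sup_eq A hv hz
    have h2 : A.le z' v := le_trans A hle h1
    show z' ⊔' v = v
    rw [h2.2, hv]

theorem primary_filter_sep {u : D} (hu : u ⊓' u = u) {I : Set D} (hI : A.IsPrimaryIdeal I)
    (huI : u ∉ I) : ∃ M, A.IsPrimaryFilter M ∧ u ∈ M ∧ ∀ z ∈ M, z ∉ I := by
  have hG : A.IsFilter {z | u ⊓' z = u} := upset_isFilter A hu
  have hGtop : A.top ∈ {z | u ⊓' z = u} := by
    show u ⊓' A.top = u
    rw [inf_top, hu]
  have hGB : ∀ z ∈ {z | u ⊓' z = u}, z ∉ I := by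
    intro z hz hzI
    exact huI (hI.1.2 _ hzI _ (idem_le A hu hz))
  have hw : ∀ w₁ ∈ I, ∀ w₂ ∈ I, ∃ w₃,
      (∀ a b, A.le a w₁ → A.le b w₂ → A.le (A.vee a b) w₃) ∧
      ∀ S, A.IsFilter S → (∀ z ∈ S, z ∉ I) → w₃ ∉ S := by
    intro w₁ h1 w₂ h2
    refine ⟨w₁ ⊔' w₂, ?_, ?_⟩
    · intro a b ha hb
      exact vee_le A (le_trans A ha (le_sup_left A _ _)) (le_trans A hb (le_sup_right A _ _))
    · intro S _ hdisj hmem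
      exact hdisj _ hmem (hI.1.1 _ h1 _ h2)
  obtain ⟨M, hGM, hMprim, hMdisj⟩ :=
    zorn_filter A _ hG hGtop I ⟨A.bot, pi_bot_mem A hI⟩ hGB hw
  exact ⟨M, hMprim, hGM hu, hMdisj⟩

theorem primary_ideal_sep {v : D} (hv : v ⊔' v = v) {F : Set D} (hF : A.IsPrimaryFilter F)
    (hvF : v ∉ F) : ∃ M, A.IsPrimaryIdeal M ∧ v ∈ M ∧ ∀ z ∈ M, z ∉ F := by
  have hG : A.IsIdeal {z | z ⊔' v = v} := downset_isIdeal A hv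
  have hGbot : A.bot ∈ {z | z ⊔' v = v} := by
    show A.bot ⊔' v = v
    rw [bot_sup, hv]
  have hGB : ∀ z ∈ {z | z ⊔' v = v}, z ∉ F := by
    intro z hz hzF
    exact hvF (hF.1.2 _ hzF _ (le_of_sup_eq A hv hz))
  have hw : ∀ w₁ ∈ F, ∀ w₂ ∈ F, ∃ w₃,
      (∀ a b, A.le w₁ a → A.le w₂ b → A.le w₃ (A.wedge a b)) ∧
      ∀ S, A.IsIdeal S → (∀ z ∈ S, z ∉ F) → w₃ ∉ S := by
    intro w₁ h1 w₂ h2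
    refine ⟨w₁ ⊓' w₂, ?_, ?_⟩
    · intro a b ha hb
      exact le_wedge A (le_trans A (inf_le_left A _ _) ha) (le_trans A (inf_le_right A _ _) hb)
    · intro S _ hdisj hmem
      exact hdisj _ hmem (hF.1.1 _ h1 _ h2)
  obtain ⟨M, hGM, hMprim, hMdisj⟩ :=
    zorn_ideal A _ hG hGbot F ⟨A.top, pf_top_mem A hF⟩ hGB hw
  exact ⟨M, hMprim, hGM hv, hMdisj⟩

theorem obbox_Fset {u : D} (hu : u ⊓' u = u) :
    obbox (nabla A) (Fset A (A.neg u)) = Iset A u := by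
  ext I
  constructor
  · intro hI
    by_contra huI
    obtain ⟨M, hMprim, huM, hMdisj⟩ := primary_filter_sep A hu I.2 huI
    have hnab : nabla A ⟨M, hMprim⟩ I := by
      apply Set.eq_empty_of_forall_notMem
      rintro z ⟨hzM, hzI⟩
      exact hMdisj z hzM hzI
    have := hI ⟨M, hMprim⟩ hnab
    exact pf_not_both A hMprim huM this
  · intro huI F hnab
    have huF : u ∉ F.val := by
      intro huF
      have : u ∈ F.val ∩ I.val := ⟨huF, huI⟩
      rw [hnab] at this
      exact this
    exact (pf_neg_mem_iff A F.2).mpr huF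

theorem odia_Iset {v : D} (hv : v ⊔' v = v) :
    odia (nabla A) (Iset A v) = Fset A (A.neg v) := by
  ext F
  constructor
  · rintro ⟨I, hvI, hnab⟩
    have hvF : v ∉ F.val := by
      intro hvF
      have : v ∈ F.val ∩ I.val := ⟨hvF, hvI⟩
      rw [hnab] at this
      exact this
    exact (pf_neg_mem_iff A F.2).mpr hvF
  · intro hF
    have hvF : v ∉ F.val := fun h => pf_not_both A F.2 h hF
    obtain ⟨M, hMprim, hvM, hMdisj⟩ := primary_ideal_sep A hv F.2 hvF
    refine ⟨⟨M, hMprim⟩, hvM, ?_⟩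
    apply Set.eq_empty_of_forall_notMem
    rintro z ⟨hzF, hzM⟩
    exact hMdisj z hzM hzF

/-! ### Injectivity -/

theorem Fset_subset_imp {a b : D} (ha : a ⊓' a = a) (hab : Fset A a ⊆ Fset A b) :
    a ⊓' b = a := by
  by_contra habn
  have hG : A.IsFilter {z | a ⊓' z = a} := upset_isFilter A ha
  have hGtop : A.top ∈ {z | a ⊓' z = a} := by
    show a ⊓' A.top = a
    rw [inf_top, ha]
  have hGB : ∀ z ∈ {z | a ⊓' z = a}, z ∉ ({b} : Set D) := by
    intro z hz hzb
    rw [Set.mem_singleton_iff] at hzb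
    subst hzb
    exact habn hz
  have hw : ∀ w₁ ∈ ({b} : Set D), ∀ w₂ ∈ ({b} : Set D), ∃ w₃,
      (∀ x y, A.le x w₁ → A.le y w₂ → A.le (A.vee x y) w₃) ∧
      ∀ S, A.IsFilter S → (∀ z ∈ S, z ∉ ({b} : Set D)) → w₃ ∉ S := by
    rintro w₁ h1 w₂ h2
    have e : w₂ = w₁ := by
      rw [Set.mem_singleton_iff] at h1 h2; rw [h1, h2]
    exact ⟨w₁, fun x y hx hy => vee_le A hx (e ▸ hy), fun S _ hdisj hmem => hdisj _ hmem h1⟩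
  obtain ⟨M, hGM, hMprim, hMdisj⟩ :=
    zorn_filter A _ hG hGtop {b} ⟨b, rfl⟩ hGB hw
  have haM : a ∈ M := hGM ha
  have hbM : b ∈ M := hab (show (⟨M, hMprim⟩ : PrimF A) ∈ Fset A a from haM)
  exact hMdisj b hbM rfl

theorem Iset_subset_imp {a b : D} (ha : a ⊔' a = a) (hab : Iset A a ⊆ Iset A b) :
    b ⊔' a = a := by
  by_contra habn
  have hG : A.IsIdeal {z | z ⊔' a = a} := downset_isIdeal A ha
  have hGbot : A.bot ∈ {z | z ⊔' a = a} := by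
    show A.bot ⊔' a = a
    rw [bot_sup, ha]
  have hGB : ∀ z ∈ {z | z ⊔' a = a}, z ∉ ({b} : Set D) := by
    intro z hz hzb
    rw [Set.mem_singleton_iff] at hzb
    subst hzb
    exact habn hz
  have hw : ∀ w₁ ∈ ({b} : Set D), ∀ w₂ ∈ ({b} : Set D), ∃ w₃,
      (∀ x y, A.le w₁ x → A.le w₂ y → A.le w₃ (A.wedge x y)) ∧
      ∀ S, A.IsIdeal S → (∀ z ∈ S, z ∉ ({b} : Set D)) → w₃ ∉ S := by
    rintro w₁ h1 w₂ h2
    have e : w₂ = w₁ := by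
      rw [Set.mem_singleton_iff] at h1 h2; rw [h1, h2]
    exact ⟨w₁, fun x y hx hy => le_wedge A hx (e ▸ hy), fun S _ hdisj hmem => hdisj _ hmem h1⟩
  obtain ⟨M, hGM, hMprim, hMdisj⟩ :=
    zorn_ideal A _ hG hGbot {b} ⟨b, rfl⟩ hGB hw
  have haM : a ∈ M := hGM ha
  have hbM : b ∈ M := hab (show (⟨M, hMprim⟩ : PrimI A) ∈ Iset A a from haM)
  exact hMdisj b hbM rfl

theorem Fset_inj {u u' : D} (hu : u ⊓' u = u) (hu' : u' ⊓' u' = u')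
    (h : Fset A u = Fset A u') : u = u' := by
  have h1 : u ⊓' u' = u := Fset_subset_imp A hu h.subset
  have h2 : u' ⊓' u = u' := Fset_subset_imp A hu' h.symm.subset
  rw [← h1, A.ax2a, h2]

theorem Iset_inj {u u' : D} (hu : u ⊔' u = u) (hu' : u' ⊔' u' = u')
    (h : Iset A u = Iset A u') : u = u' := by
  have h1 : u' ⊔' u = u := Iset_subset_imp A hu h.subset
  have h2 : u ⊔' u' = u' := Iset_subset_imp A hu' h.symm.subset
  rw [← h1, A.ax2b, h2]

/-! ### Generated filters, FIP, and compactness -/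

def linf (l : List D) : D := l.foldr A.inf A.top

def lsup (l : List D) : D := l.foldr A.sup A.bot

theorem mem_linf {F : Set D} (hF : A.IsPrimaryFilter F) :
    ∀ l : List D, (linf A l ∈ F ↔ ∀ a ∈ l, a ∈ F) := by
  intro l
  induction l with
  | nil =>
    simp only [List.not_mem_nil, false_implies, implies_true, iff_true]
    exact pf_top_mem A hF
  | cons a l ih =>
    show a ⊓' linf A l ∈ F ↔ _
    rw [pf_inf_mem_iff A hF, ih]
    simp

theorem mem_lsup {I : Set D} (hI : A.IsPrimaryIdeal I) :
    ∀ l : List D, (lsup A l ∈ I ↔ ∀ a ∈ l, a ∈ I) := by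
  intro l
  induction l with
  | nil =>
    simp only [List.not_mem_nil, false_implies, implies_true, iff_true]
    exact pi_bot_mem A hI
  | cons a l ih =>
    show a ⊔' lsup A l ∈ I ↔ _
    rw [pi_sup_mem_iff A hI, ih]
    simp

theorem linf_append (l l' : List D) (z : D) :
    linf A (l ++ l') ⊓' z = (linf A l ⊓' linf A l') ⊓' z := by
  induction l with
  | nil =>
    show linf A l' ⊓' z = (A.top ⊓' linf A l') ⊓' z
    rw [top_inf, A.ax1a]
  | cons a l ih =>
    show (a ⊓' linf A (l ++ l')) ⊓' z = ((a ⊓' linf A l) ⊓' linf A l') ⊓' z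
    calc (a ⊓' linf A (l ++ l')) ⊓' z = a ⊓' (linf A (l ++ l') ⊓' z) := (A.ax3a _ _ _).symm
      _ = a ⊓' ((linf A l ⊓' linf A l') ⊓' z) := by rw [ih]
      _ = ((a ⊓' linf A l) ⊓' linf A l') ⊓' z := by rw [A.ax3a, A.ax3a]

theorem lsup_append (l l' : List D) (z : D) :
    lsup A (l ++ l') ⊔' z = (lsup A l ⊔' lsup A l') ⊔' z := by
  induction l with
  | nil =>
    show lsup A l' ⊔' z = (A.bot ⊔' lsup A l') ⊔' z
    rw [bot_sup, A.ax1b]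
  | cons a l ih =>
    show (a ⊔' lsup A (l ++ l')) ⊔' z = ((a ⊔' lsup A l) ⊔' lsup A l') ⊔' z
    calc (a ⊔' lsup A (l ++ l')) ⊔' z = a ⊔' (lsup A (l ++ l') ⊔' z) := (A.ax3b _ _ _).symm
      _ = a ⊔' ((lsup A l ⊔' lsup A l') ⊔' z) := by rw [ih]
      _ = ((a ⊔' lsup A l) ⊔' lsup A l') ⊔' z := by rw [A.ax3b, A.ax3b]

theorem linf_sq (l l' : List D) :
    linf A (l ++ l') ⊓' linf A (l ++ l') = (linf A l ⊓' linf A l') ⊓' (linf A l ⊓' linf A l') := by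
  rw [linf_append]
  rw [A.ax2a (linf A l ⊓' linf A l') (linf A (l ++ l'))]
  rw [linf_append]

theorem lsup_sq (l l' : List D) :
    lsup A (l ++ l') ⊔' lsup A (l ++ l') = (lsup A l ⊔' lsup A l') ⊔' (lsup A l ⊔' lsup A l') := by
  rw [lsup_append]
  rw [A.ax2b (lsup A l ⊔' lsup A l') (lsup A (l ++ l'))]
  rw [lsup_append]

def genF (S : Set D) : Set D :=
  {z | ∃ l : List D, (∀ a ∈ l, a ∈ S) ∧ linf A l ⊓' z = linf A l ⊓' linf A l}

def genI (S : Set D) : Set D :=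
  {z | ∃ l : List D, (∀ a ∈ l, a ∈ S) ∧ lsup A l ⊔' z = lsup A l ⊔' lsup A l}

theorem genF_isFilter (S : Set D) : A.IsFilter (genF A S) := by
  constructor
  · rintro z ⟨l, hl, hz⟩ z' ⟨l', hl', hz'⟩
    refine ⟨l ++ l', ?_, ?_⟩
    · intro a ha
      rcases List.mem_append.mp ha with h | h
      · exact hl a h
      · exact hl' a h
    · rw [linf_append, linf_sq]
      calc (linf A l ⊓' linf A l') ⊓' (z ⊓' z')
          = (linf A l ⊓' z) ⊓' (linf A l' ⊓' z') := by ac_rfl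
        _ = (linf A l ⊓' linf A l) ⊓' (linf A l' ⊓' linf A l') := by rw [hz, hz']
        _ = (linf A l ⊓' linf A l') ⊓' (linf A l ⊓' linf A l') := by ac_rfl
  · rintro z ⟨l, hl, hz⟩ z' hle
    refine ⟨l, hl, ?_⟩
    have h1 : A.le (linf A l ⊓' linf A l) z := by
      apply idem_le A (inf_idem2 A _ _)
      rw [A.ax1a]
      exact hz
    have h2 := le_trans A h1 hle
    have h3 := h2.1
    rw [A.ax1a, inf_idem2] at h3
    exact h3

theorem genI_isIdeal (S : Set D) : A.IsIdeal (genI A S) := by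
  constructor
  · rintro z ⟨l, hl, hz⟩ z' ⟨l', hl', hz'⟩
    refine ⟨l ++ l', ?_, ?_⟩
    · intro a ha
      rcases List.mem_append.mp ha with h | h
      · exact hl a h
      · exact hl' a h
    · rw [lsup_append, lsup_sq]
      calc (lsup A l ⊔' lsup A l') ⊔' (z ⊔' z')
          = (lsup A l ⊔' z) ⊔' (lsup A l' ⊔' z') := by ac_rfl
        _ = (lsup A l ⊔' lsup A l) ⊔' (lsup A l' ⊔' lsup A l') := by rw [hz, hz']
        _ = (lsup A l ⊔' lsup A l') ⊔' (lsup A l ⊔' lsup A l') := by ac_rfl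
  · rintro z ⟨l, hl, hz⟩ z' hle
    refine ⟨l, hl, ?_⟩
    have h1 : A.le z (lsup A l ⊔' lsup A l) := by
      apply le_of_sup_eq A (sup_idem2 A _ _)
      calc z ⊔' (lsup A l ⊔' lsup A l) = (z ⊔' lsup A l) ⊔' lsup A l := A.ax3b _ _ _
        _ = (lsup A l ⊔' z) ⊔' lsup A l := by rw [A.ax2b z (lsup A l)]
        _ = (lsup A l ⊔' lsup A l) ⊔' lsup A l := by rw [hz]
        _ = lsup A l ⊔' lsup A l := by rw [A.ax1b]
    have h2 := le_trans A hle h1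
    have h3 := h2.2
    rw [sup_idem2] at h3
    calc lsup A l ⊔' z' = (lsup A l ⊔' lsup A l) ⊔' z' := (A.ax1b _ _).symm
      _ = z' ⊔' (lsup A l ⊔' lsup A l) := A.ax2b _ _
      _ = lsup A l ⊔' lsup A l := h3

theorem genF_subset (S : Set D) : S ⊆ genF A S := by
  intro a ha
  refine ⟨[a], by simpa using ha, ?_⟩
  show (a ⊓' A.top) ⊓' a = (a ⊓' A.top) ⊓' (a ⊓' A.top)
  rw [inf_top A a, A.ax1a, inf_idem2]

theorem genI_subset (S : Set D) : S ⊆ genI A S := by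
  intro a ha
  refine ⟨[a], by simpa using ha, ?_⟩
  show (a ⊔' A.bot) ⊔' a = (a ⊔' A.bot) ⊔' (a ⊔' A.bot)
  rw [sup_bot A a, A.ax1b, sup_idem2]

theorem genF_top (S : Set D) : A.top ∈ genF A S := by
  exact ⟨[], by simp, rfl⟩

theorem genI_bot (S : Set D) : A.bot ∈ genI A S := by
  exact ⟨[], by simp, rfl⟩

theorem vee_bot {a b : D} (haa : a ⊓' a = A.bot) (hbb : b ⊓' b = A.bot) :
    A.vee a b = A.bot := by
  unfold DBA.vee
  rw [← A.ax4a a, ← A.ax4a b, haa, hbb, A.ax10a, inf_idem2, ← A.ax11a, ← A.ax4a A.top]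

theorem wedge_top {a b : D} (haa : a ⊔' a = A.top) (hbb : b ⊔' b = A.top) :
    A.wedge a b = A.top := by
  unfold DBA.wedge
  rw [← A.ax4b a, ← A.ax4b b, haa, hbb, A.ax10b, sup_idem2, ← A.ax11b, ← A.ax4b A.bot]

theorem fip_filter {P : Set D} (h : ∀ F : PrimF A, ¬ ∀ w ∈ P, w ∈ F.val) :
    ∃ l : List D, (∀ a ∈ l, a ∈ P) ∧ ∀ F : PrimF A, linf A l ∉ F.val := by
  by_contra hno
  push_neg at hno
  have hGB : ∀ z ∈ genF A P, z ∉ ({A.bot} : Set D) := by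
    rintro z ⟨l, hl, hz⟩ hzb
    rw [Set.mem_singleton_iff] at hzb
    subst hzb
    rw [inf_bot] at hz
    obtain ⟨F, hF⟩ := hno l hl
    have : linf A l ⊓' linf A l ∈ F.val := F.2.1.1 _ hF _ hF
    rw [← hz] at this
    exact pf_bot_not_mem A F.2 this
  have hw : ∀ w₁ ∈ ({A.bot} : Set D), ∀ w₂ ∈ ({A.bot} : Set D), ∃ w₃,
      (∀ a b, A.le a w₁ → A.le b w₂ → A.le (A.vee a b) w₃) ∧
      ∀ S, A.IsFilter S → (∀ z ∈ S, z ∉ ({A.bot} : Set D)) → w₃ ∉ S := by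
    rintro w₁ h1 w₂ h2
    rw [Set.mem_singleton_iff] at h1 h2
    subst h1; subst h2
    refine ⟨A.bot, ?_, fun S _ hdisj hmem => hdisj _ hmem rfl⟩
    intro a b ha hb
    have haa : a ⊓' a = A.bot := by rw [← ha.1, inf_bot]
    have hbb : b ⊓' b = A.bot := by rw [← hb.1, inf_bot]
    rw [vee_bot A haa hbb]
    exact le_refl A _
  obtain ⟨M, hGM, hMprim, _⟩ :=
    zorn_filter A _ (genF_isFilter A P) (genF_top A P) {A.bot} ⟨A.bot, rfl⟩ hGB hw
  exact h ⟨M, hMprim⟩ fun w hw' => hGM (genF_subset A P hw')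

theorem fip_ideal {P : Set D} (h : ∀ I : PrimI A, ¬ ∀ w ∈ P, w ∈ I.val) :
    ∃ l : List D, (∀ a ∈ l, a ∈ P) ∧ ∀ I : PrimI A, lsup A l ∉ I.val := by
  by_contra hno
  push_neg at hno
  have hGB : ∀ z ∈ genI A P, z ∉ ({A.top} : Set D) := by
    rintro z ⟨l, hl, hz⟩ hzb
    rw [Set.mem_singleton_iff] at hzb
    subst hzb
    rw [sup_top] at hz
    obtain ⟨I, hI⟩ := hno l hl
    have : lsup A l ⊔' lsup A l ∈ I.val := I.2.1.1 _ hI _ hI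
    rw [← hz] at this
    exact pi_top_not_mem A I.2 this
  have hw : ∀ w₁ ∈ ({A.top} : Set D), ∀ w₂ ∈ ({A.top} : Set D), ∃ w₃,
      (∀ a b, A.le w₁ a → A.le w₂ b → A.le w₃ (A.wedge a b)) ∧
      ∀ S, A.IsIdeal S → (∀ z ∈ S, z ∉ ({A.top} : Set D)) → w₃ ∉ S := by
    rintro w₁ h1 w₂ h2
    rw [Set.mem_singleton_iff] at h1 h2
    subst h1; subst h2
    refine ⟨A.top, ?_, fun S _ hdisj hmem => hdisj _ hmem rfl⟩
    intro a b ha hb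
    have haa : a ⊔' a = A.top := by rw [← ha.2, top_sup]
    have hbb : b ⊔' b = A.top := by rw [← hb.2, top_sup]
    rw [wedge_top A haa hbb]
    exact le_refl A _
  obtain ⟨M, hGM, hMprim, _⟩ :=
    zorn_ideal A _ (genI_isIdeal A P) (genI_bot A P) {A.top} ⟨A.top, rfl⟩ hGB hw
  exact h ⟨M, hMprim⟩ fun w hw' => hGM (genI_subset A P hw')

/-! ### Topology -/

theorem filt_open_iff {U : Set (PrimF A)} (h : @IsOpen _ (filtTop A) U) :
    ∃ T : Set D, U = ⋃ y ∈ T, (Fset A y)ᶜ := by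
  have h' : TopologicalSpace.GenerateOpen {V | ∃ x : D, V = (Fset A x)ᶜ} U := h
  clear h
  induction h' with
  | basic V hV =>
    obtain ⟨x, rfl⟩ := hV
    exact ⟨{x}, by simp⟩
  | univ =>
    refine ⟨{A.bot}, ?_⟩
    simp [Fset_bot A]
  | inter V W _ _ ihV ihW =>
    obtain ⟨T₁, rfl⟩ := ihV
    obtain ⟨T₂, rfl⟩ := ihW
    refine ⟨{w | ∃ y ∈ T₁, ∃ z ∈ T₂, w = A.vee y z}, ?_⟩
    ext F
    simp only [Set.mem_inter_iff, Set.mem_iUnion, Set.mem_compl_iff, Set.mem_setOf_eq,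
      exists_prop]
    constructor
    · rintro ⟨⟨y, hy, hFy⟩, ⟨z, hz, hFz⟩⟩
      refine ⟨A.vee y z, ⟨y, hy, z, hz, rfl⟩, ?_⟩
      rw [Fset_vee]
      rintro (hmem | hmem)
      · exact hFy hmem
      · exact hFz hmem
    · rintro ⟨w, ⟨y, hy, z, hz, rfl⟩, hw⟩
      rw [Fset_vee] at hw
      exact ⟨⟨y, hy, fun hm => hw (Or.inl hm)⟩, ⟨z, hz, fun hm => hw (Or.inr hm)⟩⟩
  | sUnion C _ ih =>
    choose T hT using ih
    refine ⟨{y | ∃ s, ∃ hs : s ∈ C, y ∈ T s hs}, ?_⟩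
    ext F
    simp only [Set.mem_sUnion, Set.mem_iUnion, Set.mem_compl_iff, Set.mem_setOf_eq,
      exists_prop]
    constructor
    · rintro ⟨s, hs, hFs⟩
      rw [hT s hs] at hFs
      simp only [Set.mem_iUnion, Set.mem_compl_iff, exists_prop] at hFs
      obtain ⟨y, hy, hFy⟩ := hFs
      exact ⟨y, ⟨s, hs, hy⟩, hFy⟩
    · rintro ⟨y, ⟨s, hs, hy⟩, hFy⟩
      refine ⟨s, hs, ?_⟩
      rw [hT s hs]
      simp only [Set.mem_iUnion, Set.mem_compl_iff, exists_prop]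
      exact ⟨y, hy, hFy⟩

theorem idl_open_iff {U : Set (PrimI A)} (h : @IsOpen _ (idlTop A) U) :
    ∃ T : Set D, U = ⋃ y ∈ T, (Iset A y)ᶜ := by
  have h' : TopologicalSpace.GenerateOpen {V | ∃ x : D, V = (Iset A x)ᶜ} U := h
  clear h
  induction h' with
  | basic V hV =>
    obtain ⟨x, rfl⟩ := hV
    exact ⟨{x}, by simp⟩
  | univ =>
    refine ⟨{A.top}, ?_⟩
    simp [Iset_top A]
  | inter V W _ _ ihV ihW =>
    obtain ⟨T₁, rfl⟩ := ihV
    obtain ⟨T₂, rfl⟩ := ihW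
    refine ⟨{w | ∃ y ∈ T₁, ∃ z ∈ T₂, w = A.wedge y z}, ?_⟩
    ext I
    simp only [Set.mem_inter_iff, Set.mem_iUnion, Set.mem_compl_iff, Set.mem_setOf_eq,
      exists_prop]
    constructor
    · rintro ⟨⟨y, hy, hFy⟩, ⟨z, hz, hFz⟩⟩
      refine ⟨A.wedge y z, ⟨y, hy, z, hz, rfl⟩, ?_⟩
      rw [Iset_wedge]
      rintro (hmem | hmem)
      · exact hFy hmem
      · exact hFz hmem
    · rintro ⟨w, ⟨y, hy, z, hz, rfl⟩, hw⟩
      rw [Iset_wedge] at hw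
      exact ⟨⟨y, hy, fun hm => hw (Or.inl hm)⟩, ⟨z, hz, fun hm => hw (Or.inr hm)⟩⟩
  | sUnion C _ ih =>
    choose T hT using ih
    refine ⟨{y | ∃ s, ∃ hs : s ∈ C, y ∈ T s hs}, ?_⟩
    ext I
    simp only [Set.mem_sUnion, Set.mem_iUnion, Set.mem_compl_iff, Set.mem_setOf_eq,
      exists_prop]
    constructor
    · rintro ⟨s, hs, hFs⟩
      rw [hT s hs] at hFs
      simp only [Set.mem_iUnion, Set.mem_compl_iff, exists_prop] at hFs
      obtain ⟨y, hy, hFy⟩ := hFs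
      exact ⟨y, ⟨s, hs, hy⟩, hFy⟩
    · rintro ⟨y, ⟨s, hs, hy⟩, hFy⟩
      refine ⟨s, hs, ?_⟩
      rw [hT s hs]
      simp only [Set.mem_iUnion, Set.mem_compl_iff, exists_prop]
      exact ⟨y, hy, hFy⟩

theorem clopen_Fset {C : Set (PrimF A)} (hc : @IsClopen _ (filtTop A) C) :
    ∃ a : D, C = Fset A a := by
  classical
  obtain ⟨T₂, hT₂⟩ := filt_open_iff A hc.2
  obtain ⟨T₁, hT₁⟩ := filt_open_iff A hc.1.isOpen_compl
  have hCeq : C = ⋂ z ∈ T₁, Fset A z := by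
    rw [← compl_compl C, hT₁]
    simp
  have hCc : Cᶜ = ⋂ y ∈ T₂, Fset A y := by
    conv_lhs => rw [hT₂]
    simp
  have hfip : ∀ F : PrimF A, ¬ ∀ w ∈ T₁ ∪ T₂, w ∈ F.val := by
    intro F hall
    have h1 : F ∈ C := by
      rw [hCeq]
      simp only [Set.mem_iInter]
      exact fun z hz => hall z (Or.inl hz)
    have h2 : F ∈ Cᶜ := by
      rw [hCc]
      simp only [Set.mem_iInter]
      exact fun z hz => hall z (Or.inr hz)
    exact h2 h1
  obtain ⟨l, hlP, hlF⟩ := fip_filter A hfip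
  set l₁ := l.filter (fun a => decide (a ∈ T₁)) with hl₁
  set l₂ := l.filter (fun a => decide (a ∉ T₁)) with hl₂
  have hmem₁ : ∀ a ∈ l₁, a ∈ T₁ := by
    intro a ha
    have := List.of_mem_filter ha
    simpa using this
  have hmem₂ : ∀ a ∈ l₂, a ∈ T₂ := by
    intro a ha
    have h2 := List.of_mem_filter ha
    have h3 : a ∉ T₁ := by simpa using h2
    rcases hlP a (List.mem_of_mem_filter ha) with h | h
    · exact absurd h h3
    · exact h
  refine ⟨linf A l₁, ?_⟩
  have hq : C ⊆ Fset A (linf A l₁) := by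
    intro F hF
    rw [mem_Fset, mem_linf A F.2]
    intro a ha
    rw [hCeq] at hF
    simp only [Set.mem_iInter] at hF
    exact hF a (hmem₁ a ha)
  have hr : Cᶜ ⊆ Fset A (linf A l₂) := by
    intro F hF
    rw [mem_Fset, mem_linf A F.2]
    intro a ha
    rw [hCc] at hF
    simp only [Set.mem_iInter] at hF
    exact hF a (hmem₂ a ha)
  have hdisj : ∀ F : PrimF A, F ∈ Fset A (linf A l₁) → F ∈ Fset A (linf A l₂) → False := by
    intro F hF1 hF2
    apply hlF F
    rw [mem_linf A F.2]
    intro a ha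
    by_cases hT : a ∈ T₁
    · have : a ∈ l₁ := List.mem_filter.mpr ⟨ha, by simpa using hT⟩
      exact (mem_linf A F.2 l₁).mp hF1 a this
    · have : a ∈ l₂ := List.mem_filter.mpr ⟨ha, by simpa using hT⟩
      exact (mem_linf A F.2 l₂).mp hF2 a this
  ext F
  constructor
  · exact fun h => hq h
  · intro hF
    by_contra hFC
    exact hdisj F hF (hr hFC)

theorem clopen_Iset {C : Set (PrimI A)} (hc : @IsClopen _ (idlTop A) C) :
    ∃ a : D, C = Iset A a := by
  classical
  obtain ⟨T₂, hT₂⟩ := idl_open_iff A hc.2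
  obtain ⟨T₁, hT₁⟩ := idl_open_iff A hc.1.isOpen_compl
  have hCeq : C = ⋂ z ∈ T₁, Iset A z := by
    rw [← compl_compl C, hT₁]
    simp
  have hCc : Cᶜ = ⋂ y ∈ T₂, Iset A y := by
    conv_lhs => rw [hT₂]
    simp
  have hfip : ∀ F : PrimI A, ¬ ∀ w ∈ T₁ ∪ T₂, w ∈ F.val := by
    intro F hall
    have h1 : F ∈ C := by
      rw [hCeq]
      simp only [Set.mem_iInter]
      exact fun z hz => hall z (Or.inl hz)
    have h2 : F ∈ Cᶜ := by
      rw [hCc]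
      simp only [Set.mem_iInter]
      exact fun z hz => hall z (Or.inr hz)
    exact h2 h1
  obtain ⟨l, hlP, hlF⟩ := fip_ideal A hfip
  set l₁ := l.filter (fun a => decide (a ∈ T₁)) with hl₁
  set l₂ := l.filter (fun a => decide (a ∉ T₁)) with hl₂
  have hmem₁ : ∀ a ∈ l₁, a ∈ T₁ := by
    intro a ha
    have := List.of_mem_filter ha
    simpa using this
  have hmem₂ : ∀ a ∈ l₂, a ∈ T₂ := by
    intro a ha
    have h2 := List.of_mem_filter ha
    have h3 : a ∉ T₁ := by simpa using h2
    rcases hlP a (List.mem_of_mem_filter ha) with h | h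
    · exact absurd h h3
    · exact h
  refine ⟨lsup A l₁, ?_⟩
  have hq : C ⊆ Iset A (lsup A l₁) := by
    intro F hF
    show lsup A l₁ ∈ F.val
    rw [mem_lsup A F.2]
    intro a ha
    rw [hCeq] at hF
    simp only [Set.mem_iInter] at hF
    exact hF a (hmem₁ a ha)
  have hr : Cᶜ ⊆ Iset A (lsup A l₂) := by
    intro F hF
    show lsup A l₂ ∈ F.val
    rw [mem_lsup A F.2]
    intro a ha
    rw [hCc] at hF
    simp only [Set.mem_iInter] at hF
    exact hF a (hmem₂ a ha)
  have hdisj : ∀ F : PrimI A, F ∈ Iset A (lsup A l₁) → F ∈ Iset A (lsup A l₂) → False := by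
    intro F hF1 hF2
    apply hlF F
    rw [mem_lsup A F.2]
    intro a ha
    by_cases hT : a ∈ T₁
    · have : a ∈ l₁ := List.mem_filter.mpr ⟨ha, by simpa using hT⟩
      exact (mem_lsup A F.2 l₁).mp hF1 a this
    · have : a ∈ l₂ := List.mem_filter.mpr ⟨ha, by simpa using hT⟩
      exact (mem_lsup A F.2 l₂).mp hF2 a this
  ext F
  constructor
  · exact fun h => hq h
  · intro hF
    by_contra hFC
    exact hdisj F hF (hr hFC)

/-! ### Clopenness of Fset and Iset -/

theorem Fset_closed (z : D) : @IsClosed _ (filtTop A) (Fset A z) :=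
  @IsClosed.mk _ (filtTop A) _ (TopologicalSpace.GenerateOpen.basic _ ⟨z, rfl⟩)

theorem Fset_open (z : D) : @IsOpen _ (filtTop A) (Fset A z) := by
  have e : (Fset A (A.neg z))ᶜ = Fset A z := by rw [Fset_neg, compl_compl]
  rw [← e]
  exact TopologicalSpace.GenerateOpen.basic _ ⟨A.neg z, rfl⟩

theorem Fset_isClopen (z : D) : @IsClopen _ (filtTop A) (Fset A z) :=
  ⟨Fset_closed A z, Fset_open A z⟩

theorem Iset_closed (z : D) : @IsClosed _ (idlTop A) (Iset A z) :=
  @IsClosed.mk _ (idlTop A) _ (TopologicalSpace.GenerateOpen.basic _ ⟨z, rfl⟩)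

theorem Iset_open (z : D) : @IsOpen _ (idlTop A) (Iset A z) := by
  have e : (Iset A (A.dneg z))ᶜ = Iset A z := by rw [Iset_dneg, compl_compl]
  rw [← e]
  exact TopologicalSpace.GenerateOpen.basic _ ⟨A.dneg z, rfl⟩

theorem Iset_isClopen (z : D) : @IsClopen _ (idlTop A) (Iset A z) :=
  ⟨Iset_closed A z, Iset_open A z⟩

/-! ### The homomorphism properties -/

theorem hom_inf (x y : D) :
    protoEmb A (x ⊓' y) = pinf (nabla A) (protoEmb A x) (protoEmb A y) := by
  have h1 : Fset A (A.neg (x ⊓' y)) = Fset A (A.neg x) ∪ Fset A (A.neg y) := by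
    rw [Fset_neg, Fset_inf, Set.compl_inter, ← Fset_neg, ← Fset_neg]
  refine Prod.ext_iff.mpr ⟨h1, ?_⟩
  show Iset A (x ⊓' y) = obbox (nabla A) (Fset A (A.neg x) ∪ Fset A (A.neg y))
  rw [← h1, obbox_Fset A (inf_idem2 A x y)]

theorem hom_sup (x y : D) :
    protoEmb A (x ⊔' y) = psup (nabla A) (protoEmb A x) (protoEmb A y) := by
  have h2 : Iset A (x ⊔' y) = Iset A x ∩ Iset A y := Iset_sup A x y
  refine Prod.ext_iff.mpr ⟨?_, h2⟩
  show Fset A (A.neg (x ⊔' y)) = odia (nabla A) (Iset A x ∩ Iset A y)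
  rw [← h2, odia_Iset A (sup_idem2 A x y)]

theorem hom_neg (x : D) :
    protoEmb A (A.neg x) = pneg (nabla A) (protoEmb A x) := by
  have h1 : Fset A (A.neg (A.neg x)) = (Fset A (A.neg x))ᶜ := Fset_neg A (A.neg x)
  refine Prod.ext_iff.mpr ⟨h1, ?_⟩
  show Iset A (A.neg x) = obbox (nabla A) (Fset A (A.neg x))ᶜ
  rw [← h1, obbox_Fset A (neg_idem A x)]

theorem hom_dneg (x : D) :
    protoEmb A (A.dneg x) = pdneg (nabla A) (protoEmb A x) := by
  have h2 : Iset A (A.dneg x) = (Iset A x)ᶜ := Iset_dneg A x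
  refine Prod.ext_iff.mpr ⟨?_, h2⟩
  show Fset A (A.neg (A.dneg x)) = odia (nabla A) (Iset A x)ᶜ
  rw [← h2, odia_Iset A (dneg_idem A x)]

theorem hom_top : protoEmb A A.top = ptop := by
  refine Prod.ext_iff.mpr ⟨?_, ?_⟩
  · show Fset A (A.neg A.top) = ∅
    rw [A.ax11a, Fset_bot]
  · show Iset A A.top = ∅
    exact Iset_top A

theorem hom_bot : protoEmb A A.bot = pbot := by
  refine Prod.ext_iff.mpr ⟨?_, ?_⟩
  · show Fset A (A.neg A.bot) = Set.univ
    rw [A.ax10a, Fset_inf, Fset_top]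
    simp
  · show Iset A A.bot = Set.univ
    exact Iset_bot A

/-! ### Bijectivity -/

theorem maps_to_clopen (hp : A.Pure) (x : D) :
    @IsClopenSemi (PrimF A) (PrimI A) (filtTop A) (idlTop A) (nabla A) (protoEmb A x) := by
  refine ⟨?_, Fset_isClopen A (A.neg x), Iset_isClopen A x⟩
  rcases hp x with hx | hx
  · left
    show obbox (nabla A) (Fset A (A.neg x)) = Iset A x
    exact obbox_Fset A hx
  · right
    show odia (nabla A) (Iset A x) = Fset A (A.neg x)
    exact odia_Iset A hx

theorem emb_inj (hp : A.Pure) {x y : D} (h : protoEmb A x = protoEmb A y) : x = y := by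
  have h1 : Fset A (A.neg x) = Fset A (A.neg y) := congrArg Prod.fst h
  have h2 : Iset A x = Iset A y := congrArg Prod.snd h
  rw [Fset_neg, Fset_neg] at h1
  have h1' : Fset A x = Fset A y := compl_injective h1
  have e1 : x ⊓' x = y ⊓' y := by
    apply Fset_inj A (inf_idem2 A x x) (inf_idem2 A y y)
    rw [Fset_infxx, Fset_infxx, h1']
  have e2 : x ⊔' x = y ⊔' y := by
    apply Iset_inj A (sup_idem2 A x x) (sup_idem2 A y y)
    rw [Iset_supxx, Iset_supxx, h2]
  have key : ∀ a b : D, a ⊓' a = b ⊓' b → a ⊔' a = b ⊔' b →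
      a ⊓' a = a → b ⊔' b = b → a = b := by
    intro a b ha1 ha2 hai hbs
    have hab : a = b ⊓' b := by rw [← ha1, hai]
    have hba : b = a ⊔' a := by rw [ha2, hbs]
    calc a = b ⊓' b := hab
      _ = (b ⊔' b) ⊓' (b ⊔' b) := by rw [hbs]
      _ = (b ⊓' b) ⊔' (b ⊓' b) := (A.ax12 b).symm
      _ = a ⊔' a := by rw [← hab]
      _ = b := hba.symm
  rcases hp x with hx | hx
  · rcases hp y with hy | hy
    · rw [← hx, ← hy, e1]
    · exact key x y e1 e2 hx hy
  · rcases hp y with hy | hy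
    · exact (key y x e1.symm e2.symm hy hx).symm
    · rw [← hx, ← hy, e2]

theorem emb_surj {p : Set (PrimF A) × Set (PrimI A)}
    (hp : @IsClopenSemi (PrimF A) (PrimI A) (filtTop A) (idlTop A) (nabla A) p) :
    ∃ x : D, protoEmb A x = p := by
  obtain ⟨hsemi, hc1, hc2⟩ := hp
  obtain ⟨a, hA⟩ := clopen_Fset A hc1
  obtain ⟨b, hB⟩ := clopen_Iset A hc2
  rcases hsemi with hs | hs
  · refine ⟨A.neg a, ?_⟩
    have e1 : Fset A (A.neg (A.neg a)) = p.1 := by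
      rw [hA]
      rw [neg_neg, Fset_infxx]
    have e2 : Iset A (A.neg a) = p.2 := by
      rw [← hs, ← e1, obbox_Fset A (neg_idem A a)]
    have : protoEmb A (A.neg a) = (p.1, p.2) := Prod.ext_iff.mpr ⟨e1, e2⟩
    rw [this]
  · refine ⟨b ⊔' b, ?_⟩
    have e2 : Iset A (b ⊔' b) = p.2 := by
      rw [Iset_supxx, hB]
    have e1 : Fset A (A.neg (b ⊔' b)) = p.1 := by
      rw [← hs, ← e2, odia_Iset A (sup_idem2 A b b)]
    have : protoEmb A (b ⊔' b) = (p.1, p.2) := Prod.ext_iff.mpr ⟨e1, e2⟩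
    rw [this]

theorem pure_semiRep (hp : A.Pure) : semiRep A := by
  refine ⟨hom_inf A, hom_sup A, hom_neg A, hom_dneg A, hom_top A, hom_bot A, ?_, ?_, ?_⟩
  · intro x _
    exact maps_to_clopen A hp x
  · intro x _ y _ h
    exact emb_inj A hp h
  · intro p hps
    obtain ⟨x, hx⟩ := emb_surj A hps
    exact ⟨x, Set.mem_univ x, hx⟩

end SR

/-- Representation theorem for pure dBas: for a pure dBa D, the map
h(x) := (F_{¬x}, I_x) is a dBa isomorphism from D onto the dBa of clopen object
oriented semiconcepts of K^T_pr(D); in particular every Boolean algebra (viewed as a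
dBa with ⌟ := ¬) is isomorphic to the algebra of clopen object oriented semiconcepts
of K^T_pr(B). -/
theorem stmt18 :
    (∀ (D : Type u) (A : DBA D), A.Pure → semiRep A) ∧
    (∀ (D : Type u) [BooleanAlgebra D] (A : DBA D),
      (∀ x y : D, A.inf x y = x ⊓ y) → (∀ x y : D, A.sup x y = x ⊔ y) →
      (∀ x : D, A.neg x = xᶜ) → (∀ x : D, A.dneg x = xᶜ) →
      A.top = ⊤ → A.bot = ⊥ → semiRep A) := by
  constructor
  · intro D A hp
    exact SR.pure_semiRep A hp
  · intro D _ A hinf _ _ _ _ _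
    apply SR.pure_semiRep
    intro x
    left
    rw [hinf]
    exact inf_idem x
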